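/- For all integers m ≥ 2 and x ≥ 1, twice the number of codewords of C(m,x) whose two leftmost bits c_{m−1} c_{m−2} equal 00 is N(m−1,x); equivalently, the cardinality of Group 1 (codewords starting with 00 from the left) is (1/2) N(m−1,x). -/
import Mathlib


/-- `noForbidden m x c` says the binary word `c = (c_{m-1}, …, c_0)` contains no contiguous
subword of the form `0 1^y 0` or `1 0^y 1` for any `1 ≤ y ≤ x`. -/
def noForbidden (m x : ℕ) (c : Fin m → Bool) : Prop :=
  ∀ j y : ℕ, 1 ≤ y → y ≤ x → (h : j + y + 1 < m) →
    ¬ ((∀ k, 1 ≤ k → (hk : k ≤ y) → c ⟨j + k, by omega⟩ = ! c ⟨j, by omega⟩) ∧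
        c ⟨j + y + 1, h⟩ = c ⟨j, by omega⟩)

/-- `N(m, x)`: the cardinality of the LOCO code `C(m, x)`. -/
noncomputable def locoN (m x : ℕ) : ℕ := Nat.card {c : Fin m → Bool // noForbidden m x c}

/-- `N(k, x)` extended to integer `k` by the convention `N(k, x) = 2` for `k ≤ 1`. -/
noncomputable def Nex (k : ℤ) (x : ℕ) : ℤ := if k ≤ 1 then 2 else (locoN k.toNat x : ℤ)

/-- Strict lexicographic order on binary words, comparing bits from `c_{m-1}`
(most significant) down to `c_0`, with `0 < 1`. -/
def lexLt (m : ℕ) (d c : Fin m → Bool) : Prop :=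
  ∃ i : Fin m, d i = false ∧ c i = true ∧ ∀ j : Fin m, (i : ℕ) < (j : ℕ) → d j = c j

/-- The index `g(m, x, c)` of a codeword: the number of codewords of `C(m, x)` that
precede `c` in lexicographic order. -/
noncomputable def locoIdx (m x : ℕ) (c : Fin m → Bool) : ℕ :=
  Nat.card {d : Fin m → Bool // noForbidden m x d ∧ lexLt m d c}

-- flip invariance
lemma noForbidden_not {m x : ℕ} {c : Fin m → Bool} (h : noForbidden m x c) :
    noForbidden m x (fun i => !c i) := by
  intro j y h1 h2 h3 hcon
  obtain ⟨ha, hb⟩ := hcon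
  refine h j y h1 h2 h3 ⟨fun k hk1 hk2 => ?_, ?_⟩
  · have := ha k hk1 hk2
    simp only [Bool.not_not] at this
    exact Bool.not_inj (by simpa using this)
  · exact Bool.not_inj hb

def extWord {n : ℕ} (d : Fin n → Bool) : Fin (n+1) → Bool :=
  fun i => if h : (i:ℕ) < n then d ⟨i, h⟩ else false

lemma extWord_lt {n : ℕ} (d : Fin n → Bool) (i : ℕ) (h : i < n) (h' : i < n+1) :
    extWord d ⟨i, h'⟩ = d ⟨i, h⟩ := by simp [extWord, h]

lemma extWord_top {n : ℕ} (d : Fin n → Bool) :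
    extWord d ⟨n, by omega⟩ = false := by simp [extWord]

-- restriction preserves noForbidden
lemma nf_restr {n x : ℕ} {c : Fin (n+1) → Bool} (hc : noForbidden (n+1) x c) :
    noForbidden n x (fun i => c ⟨i, by omega⟩) := by
  intro j y h1 h2 h3 hcon
  obtain ⟨ha, hb⟩ := hcon
  exact hc j y h1 h2 (by omega) ⟨fun k hk1 hk2 => ha k hk1 hk2, hb⟩

-- extension preserves noForbidden when d has top bit false
lemma nf_ext {n x : ℕ} {d : Fin n → Bool} (hn : 1 ≤ n) (hd : noForbidden n x d)
    (htop : d ⟨n-1, by omega⟩ = false) :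
    noForbidden (n+1) x (extWord d) := by
  intro j y h1 h2 h3 hcon
  obtain ⟨ha, hb⟩ := hcon
  by_cases hcase : j + y + 1 < n
  · refine hd j y h1 h2 hcase ⟨fun k hk1 hk2 => ?_, ?_⟩
    · have := ha k hk1 hk2
      rwa [extWord_lt d (j+k) (by omega), extWord_lt d j (by omega)] at this
    · have := hb
      rwa [extWord_lt d (j+y+1) (by omega), extWord_lt d j (by omega)] at this
  · -- then j+y+1 = n, so the endpoint is the top new bit (false),
    -- and c(j+y) = true contradicts d top = false
    have hjy : j + y + 1 = n := by omega
    have h5 : extWord d ⟨j+y+1, h3⟩ = false := by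
      have : (⟨j+y+1, h3⟩ : Fin (n+1)) = ⟨n, by omega⟩ := by simp [hjy]
      rw [this, extWord_top]
    have hj : extWord d ⟨j, by omega⟩ = false := by rw [← hb, h5]
    have h6 := ha y h1 (le_refl y)
    rw [hj] at h6
    rw [extWord_lt d (j+y) (by omega)] at h6
    have : (⟨j+y, by omega⟩ : Fin n) = ⟨n-1, by omega⟩ := by
      apply Fin.ext; simp; omega
    rw [this, htop] at h6
    simp at h6


lemma card_ext_eq (n x : ℕ) (hn : 1 ≤ n) :
    Nat.card {c : Fin (n+1) → Bool // noForbidden (n+1) x c ∧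
        c ⟨n, by omega⟩ = false ∧ c ⟨n-1, by omega⟩ = false}
    = Nat.card {d : Fin n → Bool // noForbidden n x d ∧ d ⟨n-1, by omega⟩ = false} := by
  apply Nat.card_congr
  refine ⟨fun c => ⟨fun i => c.1 ⟨i, by omega⟩, nf_restr c.2.1, ?_⟩,
          fun d => ⟨extWord d.1, nf_ext hn d.2.1 d.2.2, ?_, ?_⟩, ?_, ?_⟩
  · exact c.2.2.2
  · exact extWord_top d.1
  · rw [extWord_lt d.1 (n-1) (by omega)]; exact d.2.2
  · rintro ⟨c, hc⟩
    ext i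
    simp only
    by_cases h : (i : ℕ) < n
    · rw [show i = (⟨(i:ℕ), by omega⟩ : Fin (n+1)) from Fin.ext rfl, extWord_lt _ _ h]
    · have : i = (⟨n, by omega⟩ : Fin (n+1)) := Fin.ext (by show (i:ℕ) = n; omega)
      rw [this, extWord_top, hc.2.1]
  · rintro ⟨d, hd⟩
    ext i
    simp only
    rw [show i = (⟨(i:ℕ), i.2⟩ : Fin n) from Fin.ext rfl] at *
    exact extWord_lt d i i.2 (by omega)

lemma card_flip (n x : ℕ) (hn : 1 ≤ n) :
    Nat.card {d : Fin n → Bool // noForbidden n x d ∧ d ⟨n-1, by omega⟩ = true}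
    = Nat.card {d : Fin n → Bool // noForbidden n x d ∧ d ⟨n-1, by omega⟩ = false} := by
  apply Nat.card_congr
  refine ⟨fun d => ⟨fun i => !d.1 i, noForbidden_not d.2.1, by simp [d.2.2]⟩,
          fun d => ⟨fun i => !d.1 i, noForbidden_not d.2.1, by simp [d.2.2]⟩, ?_, ?_⟩
  · rintro ⟨d, hd⟩; simp
  · rintro ⟨d, hd⟩; simp

lemma card_split (n x : ℕ) (hn : 1 ≤ n) :
    locoN n x
    = Nat.card {d : Fin n → Bool // noForbidden n x d ∧ d ⟨n-1, by omega⟩ = false}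
    + Nat.card {d : Fin n → Bool // noForbidden n x d ∧ d ⟨n-1, by omega⟩ = true} := by
  classical
  rw [locoN, ← Nat.card_sum]
  apply Nat.card_congr
  refine Equiv.symm ?_
  calc {d : Fin n → Bool // noForbidden n x d ∧ d ⟨n-1, by omega⟩ = false}
        ⊕ {d : Fin n → Bool // noForbidden n x d ∧ d ⟨n-1, by omega⟩ = true}
      ≃ {d : {d : Fin n → Bool // noForbidden n x d} // d.1 ⟨n-1, by omega⟩ = false}
        ⊕ {d : {d : Fin n → Bool // noForbidden n x d} // ¬ d.1 ⟨n-1, by omega⟩ = false} :=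
        Equiv.sumCongr (Equiv.subtypeSubtypeEquivSubtypeInter _ _).symm
          ((Equiv.subtypeEquivRight (fun d => by simp)).trans
            (Equiv.subtypeSubtypeEquivSubtypeInter
              (fun d : Fin n → Bool => noForbidden n x d)
              (fun d => ¬ d ⟨n-1, by omega⟩ = false)).symm)
    _ ≃ {d : Fin n → Bool // noForbidden n x d} := Equiv.sumCompl _

lemma locoN_one (x : ℕ) : locoN 1 x = 2 := by
  rw [locoN]
  have : ∀ c : Fin 1 → Bool, noForbidden 1 x c := by
    intro c j y h1 h2 h3; omega
  rw [Nat.card_congr (Equiv.subtypeUnivEquiv this)]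
  simp [Nat.card_eq_fintype_card]


/-- For all `m ≥ 2` and `x ≥ 1`, twice the number of codewords of `C(m, x)`
whose two leftmost bits `c_{m-1} c_{m-2}` equal `00` (Group 1) is `N(m - 1, x)`. -/
theorem loco_group1_card (m x : ℕ) (hm : 2 ≤ m) (hx : 1 ≤ x) :
    2 * (Nat.card {c : Fin m → Bool // noForbidden m x c ∧
          c ⟨m - 1, by omega⟩ = false ∧ c ⟨m - 2, by omega⟩ = false} : ℤ)
      = Nex ((m : ℤ) - 1) x := by
  obtain ⟨n, rfl⟩ : ∃ n, m = n + 1 := ⟨m - 1, by omega⟩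
  have hn : 1 ≤ n := by omega
  have hlt : n - 1 < n := Nat.sub_lt hn Nat.one_pos
  have key : (Nat.card {c : Fin (n+1) → Bool // noForbidden (n+1) x c ∧
        c ⟨n+1-1, Nat.sub_lt (Nat.succ_pos n) Nat.one_pos⟩ = false ∧
        c ⟨n+1-2, Nat.sub_lt (Nat.succ_pos n) two_pos⟩ = false})
      = Nat.card {d : Fin n → Bool // noForbidden n x d ∧ d ⟨n-1, hlt⟩ = false} :=
    card_ext_eq n x hn
  have h2 : locoN n x
      = 2 * Nat.card {d : Fin n → Bool // noForbidden n x d ∧ d ⟨n-1, hlt⟩ = false} := by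
    rw [card_split n x hn, card_flip n x hn]; ring
  have h3 : Nex ((n:ℤ) + 1 - 1) x = (locoN n x : ℤ) := by
    have he : ((n:ℤ) + 1 - 1) = (n:ℤ) := by ring
    rw [he]
    simp only [Nex]
    by_cases h : (n:ℤ) ≤ 1
    · have hn1 : n = 1 := le_antisymm (by exact_mod_cast h) hn
      rw [if_pos h, hn1, locoN_one]
      norm_num
    · rw [if_neg h, Int.toNat_natCast]
  rw [key]
  push_cast at h3 ⊢
  rw [h3]
  exact_mod_cast h2.symm
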